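/- arXiv:0807.2266 — 5 statements merged into one kernel-verified Lean document; each statement's English description precedes it below -/
import Mathlib

section
/- Every connected filtered cograded bialgebra H over a commutative ring k is a Hopf algebra. The antipode is given by S(x) = Σ_{k≥0} (u∘ε − id_H)^{*k}(x) (the sum being finite on each x), it satisfies S * id_H = id_H * S = u∘ε, and on ker ε it satisfies the recursions S(x) = −x − Σ_{(x)} S(x')x'' and S(x) = −x − Σ_{(x)} x'S(x''), where Δ̃(x) = Σ_{(x)} x' ⊗ x'' denotes the reduced coproduct Δ(x) − x⊗1 − 1⊗x. -/
open TensorProduct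

/-- The convolution product `f * g = m_H ∘ (f ⊗ g) ∘ Δ` on `Hom_k(H, H)`. -/
noncomputable def conv {k C A : Type*} [CommRing k]
    [AddCommGroup C] [Module k C] [Coalgebra k C] [Ring A] [Algebra k A]
    (f g : C →ₗ[k] A) : C →ₗ[k] A :=
  LinearMap.mul' k A ∘ₗ TensorProduct.map f g ∘ₗ Coalgebra.comul

/-- The convolution unit `e = u ∘ ε`. -/
noncomputable def convUnit (k C A : Type*) [CommRing k]
    [AddCommGroup C] [Module k C] [Coalgebra k C] [Ring A] [Algebra k A] :
    C →ₗ[k] A :=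
  Algebra.linearMap k A ∘ₗ Coalgebra.counit

/-- Convolution powers `f^{*0} = u∘ε`, `f^{*(n+1)} = f^{*n} * f`. -/
noncomputable def convPow {k C A : Type*} [CommRing k]
    [AddCommGroup C] [Module k C] [Coalgebra k C] [Ring A] [Algebra k A]
    (f : C →ₗ[k] A) : ℕ → (C →ₗ[k] A)
  | 0 => convUnit k C A
  | n + 1 => conv (convPow f n) f

/-- The reduced coproduct `Δ̃(x) = Δ(x) - x ⊗ 1 - 1 ⊗ x` of a bialgebra. -/
noncomputable def reducedComul (k H : Type*) [CommRing k] [Ring H] [Bialgebra k H] :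
    H →ₗ[k] H ⊗[k] H :=
  Coalgebra.comul - ((TensorProduct.mk k H H).flip 1 + TensorProduct.mk k H H 1)

section ConvLemmas
variable {k C A : Type*} [CommRing k]
    [AddCommGroup C] [Module k C] [Coalgebra k C] [Ring A] [Algebra k A]

lemma conv_apply (f g : C →ₗ[k] A) (x : C) :
    conv f g x = LinearMap.mul' k A (TensorProduct.map f g (Coalgebra.comul x)) := rfl

lemma map_comp_left_aux {M N P Q : Type*} [AddCommGroup M] [Module k M] [AddCommGroup N] [Module k N]
    [AddCommGroup P] [Module k P] [AddCommGroup Q] [Module k Q]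
    (f : M →ₗ[k] N) (B : P →ₗ[k] M) (g : Q →ₗ[k] N) :
    TensorProduct.map (f ∘ₗ B) g = TensorProduct.map f g ∘ₗ LinearMap.rTensor Q B := by
  apply TensorProduct.ext'
  intro a b
  simp

lemma map_comp_right_aux {M N P Q : Type*} [AddCommGroup M] [Module k M] [AddCommGroup N] [Module k N]
    [AddCommGroup P] [Module k P] [AddCommGroup Q] [Module k Q]
    (f : M →ₗ[k] N) (B : P →ₗ[k] M) (g : Q →ₗ[k] N) :
    TensorProduct.map g (f ∘ₗ B) = TensorProduct.map g f ∘ₗ LinearMap.lTensor Q B := by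
  apply TensorProduct.ext'
  intro a b
  simp

lemma conv_unit_right (f : C →ₗ[k] A) : conv f (convUnit k C A) = f := by
  ext x
  rw [conv_apply, convUnit, map_comp_right_aux, LinearMap.comp_apply,
    Coalgebra.lTensor_counit_comul]
  simp

lemma conv_unit_left (f : C →ₗ[k] A) : conv (convUnit k C A) f = f := by
  ext x
  rw [conv_apply, convUnit, map_comp_left_aux, LinearMap.comp_apply,
    Coalgebra.rTensor_counit_comul]
  simp [Algebra.algebraMap_eq_smul_one]

lemma map_sub_left_aux {M N P Q : Type*} [AddCommGroup M] [Module k M] [AddCommGroup N] [Module k N]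
    [AddCommGroup P] [Module k P] [AddCommGroup Q] [Module k Q]
    (f g : M →ₗ[k] N) (h : P →ₗ[k] Q) :
    TensorProduct.map (f - g) h = TensorProduct.map f h - TensorProduct.map g h := by
  apply TensorProduct.ext'
  intro a b
  simp [sub_tmul]

lemma map_sub_right_aux {M N P Q : Type*} [AddCommGroup M] [Module k M] [AddCommGroup N] [Module k N]
    [AddCommGroup P] [Module k P] [AddCommGroup Q] [Module k Q]
    (f g : M →ₗ[k] N) (h : P →ₗ[k] Q) :
    TensorProduct.map h (f - g) = TensorProduct.map h f - TensorProduct.map h g := by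
  apply TensorProduct.ext'
  intro a b
  simp [tmul_sub]

lemma conv_sub_left (f g h : C →ₗ[k] A) : conv (f - g) h = conv f h - conv g h := by
  ext x
  simp [conv_apply, map_sub_left_aux]

lemma conv_sub_right (f g h : C →ₗ[k] A) : conv h (f - g) = conv h f - conv h g := by
  ext x
  simp [conv_apply, map_sub_right_aux]

lemma conv_add_left (f g h : C →ₗ[k] A) : conv (f + g) h = conv f h + conv g h := by
  ext x
  have : TensorProduct.map (f + g) h = TensorProduct.map f h + TensorProduct.map g h := by
    apply TensorProduct.ext'; intro a b; simp [add_tmul]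
  simp [conv_apply, this]

lemma conv_add_right (f g h : C →ₗ[k] A) : conv h (f + g) = conv h f + conv h g := by
  ext x
  have : TensorProduct.map h (f + g) = TensorProduct.map h f + TensorProduct.map h g := by
    apply TensorProduct.ext'; intro a b; simp [tmul_add]
  simp [conv_apply, this]

lemma conv_zero_left (h : C →ₗ[k] A) : conv (0 : C →ₗ[k] A) h = 0 := by
  ext x
  have : TensorProduct.map (0 : C →ₗ[k] A) h = 0 := by
    apply TensorProduct.ext'; intro a b; simp [zero_tmul]
  simp [conv_apply, this]

lemma conv_zero_right (h : C →ₗ[k] A) : conv h (0 : C →ₗ[k] A) = 0 := by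
  ext x
  have : TensorProduct.map h (0 : C →ₗ[k] A) = 0 := by
    apply TensorProduct.ext'; intro a b; simp [zero_tmul]
  simp [conv_apply, this]

lemma conv_sum_left {ι : Type*} (s : Finset ι) (f : ι → (C →ₗ[k] A)) (h : C →ₗ[k] A) :
    conv (∑ i ∈ s, f i) h = ∑ i ∈ s, conv (f i) h := by
  classical
  induction s using Finset.induction_on with
  | empty => simp [conv_zero_left]
  | insert _ _ hx ih => rw [Finset.sum_insert hx, Finset.sum_insert hx, conv_add_left, ih]

lemma conv_sum_right {ι : Type*} (s : Finset ι) (f : ι → (C →ₗ[k] A)) (h : C →ₗ[k] A) :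
    conv h (∑ i ∈ s, f i) = ∑ i ∈ s, conv h (f i) := by
  classical
  induction s using Finset.induction_on with
  | empty => simp [conv_zero_right]
  | insert _ _ hx ih => rw [Finset.sum_insert hx, Finset.sum_insert hx, conv_add_right, ih]

lemma conv_assoc (f g h : C →ₗ[k] A) : conv (conv f g) h = conv f (conv g h) := by
  ext x
  have key : ∀ u : C ⊗[k] (C ⊗[k] C),
      LinearMap.mul' k A (TensorProduct.map (LinearMap.mul' k A ∘ₗ TensorProduct.map f g) h
        ((TensorProduct.assoc k C C C).symm u)) =
      LinearMap.mul' k A (TensorProduct.map f (LinearMap.mul' k A ∘ₗ TensorProduct.map g h) u) := by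
    intro u
    induction u using TensorProduct.induction_on with
    | zero => simp
    | tmul a u2 =>
      induction u2 using TensorProduct.induction_on with
      | zero => simp
      | tmul b c => simp [mul_assoc]
      | add u v hu hv => simp only [tmul_add, map_add, hu, hv]
    | add u v hu hv => simp only [map_add, hu, hv]
  show LinearMap.mul' k A (TensorProduct.map (conv f g) h (Coalgebra.comul x))
      = LinearMap.mul' k A (TensorProduct.map f (conv g h) (Coalgebra.comul x))
  have l1 : conv f g = (LinearMap.mul' k A ∘ₗ TensorProduct.map f g) ∘ₗ Coalgebra.comul := rfl
  have l2 : conv g h = (LinearMap.mul' k A ∘ₗ TensorProduct.map g h) ∘ₗ Coalgebra.comul := rfl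
  rw [l1, l2, map_comp_left_aux, map_comp_right_aux, LinearMap.comp_apply, LinearMap.comp_apply,
    ← Coalgebra.coassoc_symm_apply, key]

lemma convPow_zero (f : C →ₗ[k] A) : convPow f 0 = convUnit k C A := rfl

lemma convPow_succ (f : C →ₗ[k] A) (m : ℕ) : convPow f (m + 1) = conv (convPow f m) f := rfl

lemma conv_convPow (f : C →ₗ[k] A) (m : ℕ) : conv f (convPow f m) = convPow f (m + 1) := by
  induction m with
  | zero =>
    rw [convPow_zero, convPow_succ, convPow_zero, conv_unit_right, conv_unit_left]
  | succ m ih =>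
    rw [convPow_succ f m, ← conv_assoc, ih, ← convPow_succ]

end ConvLemmas

open DirectSum

/-- every connected filtered cograded bialgebra `H` over a commutative ring
`k` is a Hopf algebra: there is an antipode `S` with `S * id = id * S = u∘ε`, given on
each element by the (pointwise finite) sum `S(x) = Σ_{m≥0} (u∘ε - id)^{*m}(x)`, satisfying
`S(1) = 1` and, on `ker ε`, the recursions `S(x) = -x - Σ S(x')x''` and
`S(x) = -x - Σ x'S(x'')` where `Δ̃(x) = Σ x' ⊗ x''`. -/
theorem connected_filtered_cograded_is_hopf {k H : Type*} [CommRing k] [Ring H]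
    [Bialgebra k H]
    (ℋ : ℕ → Submodule k H)
    (hdirect : DirectSum.IsInternal ℋ)
    (hmul : ∀ p q : ℕ, ∀ x ∈ ℋ p, ∀ y ∈ ℋ q, x * y ∈ ⨆ i ≤ p + q, ℋ i)
    (hcomul : ∀ n : ℕ, ∀ x ∈ ℋ n,
      Coalgebra.comul (R := k) x ∈ ⨆ (p : ℕ) (q : ℕ) (_ : p + q = n),
        LinearMap.range (TensorProduct.map (ℋ p).subtype (ℋ q).subtype))
    (hconn : ℋ 0 = Submodule.span k {(1 : H)}) :
    ∃ S : H →ₗ[k] H,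
      conv S LinearMap.id = convUnit k H H ∧
      conv LinearMap.id S = convUnit k H H ∧
      (∀ x : H, ∃ N : ℕ,
        (∀ n ≥ N, convPow (convUnit k H H - LinearMap.id) n x = 0) ∧
        S x = ∑ m ∈ Finset.range N, convPow (convUnit k H H - LinearMap.id) m x) ∧
      S 1 = 1 ∧
      (∀ x : H, Coalgebra.counit (R := k) x = 0 →
        S x = -x - LinearMap.mul' k H (TensorProduct.map S LinearMap.id (reducedComul k H x)) ∧
        S x = -x - LinearMap.mul' k H (TensorProduct.map LinearMap.id S (reducedComul k H x))) := by
  classical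
  set E : H →ₗ[k] H := convUnit k H H - LinearMap.id with hEdef
  have hE1 : E 1 = 0 := by
    simp [hEdef, convUnit]
  -- key vanishing lemma
  have key : ∀ n : ℕ, ∀ x ∈ ℋ n, ∀ m : ℕ, n < m → convPow E m x = 0 := by
    intro n
    induction n using Nat.strong_induction_on with
    | _ n IH =>
      intro x hx m hm
      obtain ⟨m', rfl⟩ : ∃ m', m = m' + 1 := ⟨m - 1, by omega⟩
      have hk : (⨆ (p : ℕ) (q : ℕ) (_ : p + q = n),
            LinearMap.range (TensorProduct.map (ℋ p).subtype (ℋ q).subtype))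
          ≤ LinearMap.ker (LinearMap.mul' k H ∘ₗ TensorProduct.map (convPow E m') E) := by
        refine iSup_le fun p => iSup_le fun q => iSup_le fun hpq => ?_
        rw [LinearMap.range_le_ker_iff]
        apply TensorProduct.ext'
        intro a b
        rcases Nat.eq_zero_or_pos q with hq | hq
        · subst hq
          have hb : (b : H) ∈ Submodule.span k {(1 : H)} := hconn ▸ b.2
          obtain ⟨c, hc⟩ := Submodule.mem_span_singleton.mp hb
          have hEb : E (b : H) = 0 := by rw [← hc, map_smul, hE1, smul_zero]
          simp [hEb]
        · have hp : p < n := by omega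
          have h0 : convPow E m' (a : H) = 0 := IH p hp a a.2 m' (by omega)
          simp [h0]
      have hmem := hk (hcomul n x hx)
      rw [LinearMap.mem_ker] at hmem
      exact hmem
  -- define S
  let T : ∀ n : ℕ, (ℋ n) →ₗ[k] H := fun n =>
    (∑ m ∈ Finset.range (n + 1), convPow E m) ∘ₗ (ℋ n).subtype
  let e : (⨁ n, ℋ n) ≃ₗ[k] H := LinearEquiv.ofBijective (DirectSum.coeLinearMap ℋ) hdirect
  let S : H →ₗ[k] H := DirectSum.toModule k ℕ H T ∘ₗ (e.symm : H →ₗ[k] ⨁ n, ℋ n)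
  have hS : ∀ (n : ℕ) (x : H) (hx : x ∈ ℋ n),
      S x = ∑ m ∈ Finset.range (n + 1), convPow E m x := by
    intro n x hx
    have h1 : e.symm x = DirectSum.lof k ℕ (fun n => ℋ n) n ⟨x, hx⟩ := by
      rw [LinearEquiv.symm_apply_eq]
      show x = DirectSum.coeLinearMap ℋ _
      rw [DirectSum.lof_eq_of, DirectSum.coeLinearMap_of]
    show DirectSum.toModule k ℕ H T (e.symm x) = _
    rw [h1, DirectSum.toModule_lof]
    simp [T]
  have hS' : ∀ (n : ℕ) (x : H), x ∈ ℋ n → ∀ N : ℕ, n < N →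
      S x = ∑ m ∈ Finset.range N, convPow E m x := by
    intro n x hx N hN
    rw [hS n x hx]
    refine Finset.sum_subset (Finset.range_subset_range.mpr (by omega)) fun m _ hm => ?_
    refine key n x hx m ?_
    simp only [Finset.mem_range] at hm
    omega
  have hxtop : ∀ x : H, x ∈ ⨆ n, ℋ n := fun x =>
    hdirect.submodule_iSup_eq_top ▸ Submodule.mem_top
  -- operator identities for partial sums
  have hid : (LinearMap.id : H →ₗ[k] H) = convUnit k H H - E := (sub_sub_cancel _ _).symm
  have hB : ∀ N : ℕ, conv (∑ m ∈ Finset.range N, convPow E m) LinearMap.id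
      = convUnit k H H - convPow E N := by
    intro N
    rw [conv_sum_left]
    calc ∑ m ∈ Finset.range N, conv (convPow E m) LinearMap.id
        = ∑ m ∈ Finset.range N, (convPow E m - convPow E (m + 1)) := by
          refine Finset.sum_congr rfl fun m _ => ?_
          rw [hid, conv_sub_right, conv_unit_right, ← convPow_succ]
      _ = convPow E 0 - convPow E N := Finset.sum_range_sub' _ N
      _ = convUnit k H H - convPow E N := by rw [convPow_zero]
  have hB' : ∀ N : ℕ, conv LinearMap.id (∑ m ∈ Finset.range N, convPow E m)
      = convUnit k H H - convPow E N := by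
    intro N
    rw [conv_sum_right]
    calc ∑ m ∈ Finset.range N, conv LinearMap.id (convPow E m)
        = ∑ m ∈ Finset.range N, (convPow E m - convPow E (m + 1)) := by
          refine Finset.sum_congr rfl fun m _ => ?_
          rw [hid, conv_sub_left, conv_unit_left, conv_convPow]
      _ = convPow E 0 - convPow E N := Finset.sum_range_sub' _ N
      _ = convUnit k H H - convPow E N := by rw [convPow_zero]
  -- agreement of S with partial sums inside convolutions
  have hagree_left : ∀ (n : ℕ) (x : H), x ∈ ℋ n →
      conv S LinearMap.id x
        = conv (∑ m ∈ Finset.range (n + 1), convPow E m) LinearMap.id x := by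
    intro n x hx
    have hker : (⨆ (p : ℕ) (q : ℕ) (_ : p + q = n),
          LinearMap.range (TensorProduct.map (ℋ p).subtype (ℋ q).subtype))
        ≤ LinearMap.ker (LinearMap.mul' k H ∘ₗ
            TensorProduct.map (S - ∑ m ∈ Finset.range (n + 1), convPow E m) LinearMap.id) := by
      refine iSup_le fun p => iSup_le fun q => iSup_le fun hpq => ?_
      rw [LinearMap.range_le_ker_iff]
      apply TensorProduct.ext'
      intro a b
      have ha : S (a : H) = ∑ m ∈ Finset.range (n + 1), convPow E m (a : H) :=
        hS' p a a.2 (n + 1) (by omega)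
      simp [ha]
    have h0 := hker (hcomul n x hx)
    rw [LinearMap.mem_ker] at h0
    rw [conv_apply, conv_apply, ← sub_eq_zero, ← map_sub, ← LinearMap.sub_apply,
      ← map_sub_left_aux]
    exact h0
  have hagree_right : ∀ (n : ℕ) (x : H), x ∈ ℋ n →
      conv LinearMap.id S x
        = conv LinearMap.id (∑ m ∈ Finset.range (n + 1), convPow E m) x := by
    intro n x hx
    have hker : (⨆ (p : ℕ) (q : ℕ) (_ : p + q = n),
          LinearMap.range (TensorProduct.map (ℋ p).subtype (ℋ q).subtype))
        ≤ LinearMap.ker (LinearMap.mul' k H ∘ₗ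
            TensorProduct.map LinearMap.id (S - ∑ m ∈ Finset.range (n + 1), convPow E m)) := by
      refine iSup_le fun p => iSup_le fun q => iSup_le fun hpq => ?_
      rw [LinearMap.range_le_ker_iff]
      apply TensorProduct.ext'
      intro a b
      have hb : S (b : H) = ∑ m ∈ Finset.range (n + 1), convPow E m (b : H) :=
        hS' q b b.2 (n + 1) (by omega)
      simp [hb]
    have h0 := hker (hcomul n x hx)
    rw [LinearMap.mem_ker] at h0
    rw [conv_apply, conv_apply, ← sub_eq_zero, ← map_sub, ← LinearMap.sub_apply,
      ← map_sub_right_aux]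
    exact h0
  -- the two antipode identities
  have hconv_left : conv S LinearMap.id = convUnit k H H := by
    apply LinearMap.ext
    intro x
    refine Submodule.iSup_induction (motive := fun x : H =>
      conv S LinearMap.id x = convUnit k H H x) ℋ (hxtop x) ?_ ?_ ?_
    · intro n y hy
      rw [hagree_left n y hy, hB (n + 1), LinearMap.sub_apply,
        key n y hy (n + 1) (by omega), sub_zero]
    · simp
    · intro a b ha hb
      rw [map_add, map_add, ha, hb]
  have hconv_right : conv LinearMap.id S = convUnit k H H := by
    apply LinearMap.ext
    intro x
    refine Submodule.iSup_induction (motive := fun x : H =>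
      conv LinearMap.id S x = convUnit k H H x) ℋ (hxtop x) ?_ ?_ ?_
    · intro n y hy
      rw [hagree_right n y hy, hB' (n + 1), LinearMap.sub_apply,
        key n y hy (n + 1) (by omega), sub_zero]
    · simp
    · intro a b ha hb
      rw [map_add, map_add, ha, hb]
  -- S 1 = 1
  have h1mem : (1 : H) ∈ ℋ 0 := by
    rw [hconn]; exact Submodule.mem_span_singleton_self 1
  have hS1 : S 1 = 1 := by
    rw [hS 0 1 h1mem, Finset.sum_range_one, convPow_zero]
    simp [convUnit]
  -- pointwise finiteness
  have hfin : ∀ x : H, ∃ N : ℕ, (∀ m ≥ N, convPow E m x = 0) ∧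
      S x = ∑ m ∈ Finset.range N, convPow E m x := by
    intro x
    refine Submodule.iSup_induction (motive := fun x : H => ∃ N : ℕ,
      (∀ m ≥ N, convPow E m x = 0) ∧
      S x = ∑ m ∈ Finset.range N, convPow E m x) ℋ (hxtop x) ?_ ?_ ?_
    · intro n y hy
      exact ⟨n + 1, fun m hm => key n y hy m (by omega), hS n y hy⟩
    · exact ⟨0, fun m _ => map_zero _, by simp⟩
    · rintro a b ⟨Na, hva, hsa⟩ ⟨Nb, hvb, hsb⟩
      refine ⟨max Na Nb, fun m hm => ?_, ?_⟩
      · rw [map_add, hva m (le_trans (le_max_left _ _) hm),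
          hvb m (le_trans (le_max_right _ _) hm), add_zero]
      · have ha' : S a = ∑ m ∈ Finset.range (max Na Nb), convPow E m a := by
          rw [hsa]
          refine Finset.sum_subset (Finset.range_subset_range.mpr (le_max_left _ _)) fun m _ hm => ?_
          exact hva m (by simp only [Finset.mem_range] at hm; omega)
        have hb' : S b = ∑ m ∈ Finset.range (max Na Nb), convPow E m b := by
          rw [hsb]
          refine Finset.sum_subset (Finset.range_subset_range.mpr (le_max_right _ _)) fun m _ hm => ?_
          exact hvb m (by simp only [Finset.mem_range] at hm; omega)
        rw [map_add, ha', hb', ← Finset.sum_add_distrib]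
        exact Finset.sum_congr rfl fun m _ => (map_add _ _ _).symm
  -- recursions on ker ε
  have hrec : ∀ x : H, Coalgebra.counit (R := k) x = 0 →
      S x = -x - LinearMap.mul' k H (TensorProduct.map S LinearMap.id (reducedComul k H x)) ∧
      S x = -x - LinearMap.mul' k H (TensorProduct.map LinearMap.id S (reducedComul k H x)) := by
    intro x hcx
    have hcom : Coalgebra.comul (R := k) x
        = reducedComul k H x + (x ⊗ₜ[k] (1 : H) + (1 : H) ⊗ₜ[k] x) := by
      have : reducedComul k H x
          = Coalgebra.comul x - (x ⊗ₜ[k] (1 : H) + (1 : H) ⊗ₜ[k] x) := by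
        simp [reducedComul]
      rw [this]; abel
    have hu0 : convUnit k H H x = 0 := by simp [convUnit, hcx]
    constructor
    · have h := LinearMap.congr_fun hconv_left x
      rw [conv_apply, hcom, hu0] at h
      simp only [map_add, TensorProduct.map_tmul, LinearMap.mul'_apply, LinearMap.id_coe,
        id_eq, hS1, mul_one, one_mul] at h
      rw [eq_neg_of_add_eq_zero_left h]
      abel
    · have h := LinearMap.congr_fun hconv_right x
      rw [conv_apply, hcom, hu0] at h
      simp only [map_add, TensorProduct.map_tmul, LinearMap.mul'_apply, LinearMap.id_coe,
        id_eq, hS1, mul_one, one_mul] at h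
      rw [eq_neg_of_add_eq_zero_left h]
      abel
  exact ⟨S, hconv_left, hconv_right, hfin, hS1, hrec⟩
end

section
/- Let H be a connected graded bialgebra over a commutative ring k (graded by H = ⊕_{n≥0} H_n with H_0 = k·1_H) and let A be a unital k-algebra. If f ∈ Hom_k(H,A) satisfies f(1_H) = 0, then for every n ≥ 0 and every x ∈ ⊕_{k≤n} H_k, the (n+1)-fold convolution power satisfies f^{*(n+1)}(x) = 0. -/
open TensorProduct

/-- let `H = ⊕ₙ Hₙ` be a connected graded bialgebra over a commutative ring
`k` and `A` a unital `k`-algebra. If `f ∈ Hom_k(H,A)` satisfies `f(1) = 0`, then for every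
`n ≥ 0` and every `x ∈ ⊕_{i ≤ n} Hᵢ` we have `f^{*(n+1)}(x) = 0`. -/
theorem conv_power_nilpotent {k H A : Type*} [CommRing k] [Ring H] [Bialgebra k H]
    [Ring A] [Algebra k A]
    (ℋ : ℕ → Submodule k H)
    (hdirect : DirectSum.IsInternal ℋ)
    (hmul : ∀ p q : ℕ, ∀ x ∈ ℋ p, ∀ y ∈ ℋ q, x * y ∈ ℋ (p + q))
    (hcomul : ∀ n : ℕ, ∀ x ∈ ℋ n,
      Coalgebra.comul (R := k) x ∈ ⨆ (p : ℕ) (q : ℕ) (_ : p + q = n),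
        LinearMap.range (TensorProduct.map (ℋ p).subtype (ℋ q).subtype))
    (hconn : ℋ 0 = Submodule.span k {(1 : H)})
    (f : H →ₗ[k] A) (hf : f 1 = 0) :
    ∀ n : ℕ, ∀ x ∈ (⨆ i ≤ n, ℋ i : Submodule k H), convPow f (n + 1) x = 0 := by
  have hA : ∀ x ∈ ℋ 0, f x = 0 := by
    intro x hx
    rw [hconn, Submodule.mem_span_singleton] at hx
    obtain ⟨c, rfl⟩ := hx
    rw [map_smul, hf, smul_zero]
  have step : ∀ (g : H →ₗ[k] A) (i : ℕ),
      (∀ p q : ℕ, p + q = i → q ≠ 0 → ℋ p ≤ LinearMap.ker g) →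
      ∀ x ∈ ℋ i, (LinearMap.mul' k A ∘ₗ TensorProduct.map g f) (Coalgebra.comul x) = 0 := by
    intro g i hg x hx
    have hmem := hcomul i x hx
    have hle : (⨆ (p : ℕ) (q : ℕ) (_ : p + q = i),
        LinearMap.range (TensorProduct.map (ℋ p).subtype (ℋ q).subtype)) ≤
        LinearMap.ker (LinearMap.mul' k A ∘ₗ TensorProduct.map g f) := by
      refine iSup_le fun p => iSup_le fun q => iSup_le fun hpq => ?_
      rw [LinearMap.range_eq_map, ← TensorProduct.span_tmul_eq_top, Submodule.map_span,
        Submodule.span_le]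
      rintro _ ⟨_, ⟨a, b, rfl⟩, rfl⟩
      have : (LinearMap.mul' k A ∘ₗ TensorProduct.map g f)
          (TensorProduct.map (ℋ p).subtype (ℋ q).subtype (a ⊗ₜ b)) = g a * f b := by
        simp [TensorProduct.map_tmul]
      rw [SetLike.mem_coe, LinearMap.mem_ker, this]
      rcases Nat.eq_zero_or_pos q with hq | hq
      · subst hq
        rw [hA b b.2, mul_zero]
      · rw [hg p q hpq (by omega) a.2, zero_mul]
    exact hle hmem
  have key : ∀ n : ℕ, ∀ i ≤ n, ℋ i ≤ LinearMap.ker (convPow f (n + 1)) := by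
    intro n
    induction n with
    | zero =>
      intro i hi x hx
      interval_cases i
      have := step (convUnit k H A) 0 (fun p q hpq hq => by omega) x hx
      simpa [convPow, conv] using this
    | succ n ih =>
      intro i hi x hx
      have := step (convPow f (n + 1)) i
        (fun p q hpq hq => ih p (by omega)) x hx
      simpa [convPow, conv] using this
  intro n x hx
  exact iSup₂_le (fun i hi => key n i hi) hx
end

section
/- Let H be a connected filtered cograded Hopf algebra over a commutative ring k and let A be a commutative unital k-algebra. Then the set Char(H,A) of characters (algebra homomorphisms H → A) is a group under the convolution product, with identity e = u_A∘ε_H, and the inverse of φ ∈ Char(H,A) is φ∘S, where S is the antipode of H. -/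
open TensorProduct

open Coalgebra

section Aux
variable {k C B : Type*} {ι κ : Type*} [CommRing k] [AddCommGroup C] [Module k C] [Coalgebra k C]
  [Ring B] [Algebra k B]

lemma conv_repr (f g : C →ₗ[k] B) {a : C} (r : Coalgebra.Repr k a ι) :
    conv f g a = ∑ i ∈ r.index, f (r.left i) * g (r.right i) := by
  have : Coalgebra.comul (R := k) a = ∑ i ∈ r.index, r.left i ⊗ₜ[k] r.right i := r.eq.symm
  simp [conv, this, map_sum]

lemma convUnit_apply (a : C) :
    convUnit k C B a = algebraMap k B (Coalgebra.counit (R := k) a) := rfl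

lemma sum_counit_smul {a : C} (r : Coalgebra.Repr k a ι) :
    ∑ i ∈ r.index, Coalgebra.counit (R := k) (r.left i) • r.right i = a := by
  have h := congrArg (TensorProduct.lid k C) (Coalgebra.sum_counit_tmul_eq r)
  simp only [map_sum, TensorProduct.lid_tmul, one_smul] at h
  exact h

lemma sum_smul_counit {a : C} (r : Coalgebra.Repr k a ι) :
    ∑ i ∈ r.index, Coalgebra.counit (R := k) (r.right i) • r.left i = a := by
  have h := congrArg (TensorProduct.rid k C) (Coalgebra.sum_tmul_counit_eq r)
  simp only [map_sum, TensorProduct.rid_tmul, one_smul] at h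
  exact h

end Aux

section Mul
variable {k H : Type*} {ι κ : Type*} [CommRing k] [Ring H] [Bialgebra k H]

/-- product of two representations -/
noncomputable def mulRepr {x y : H} (rx : Coalgebra.Repr k x ι) (ry : Coalgebra.Repr k y κ) :
    Coalgebra.Repr k (x * y) (ι × κ) where
  index := rx.index ×ˢ ry.index
  left p := rx.left p.1 * ry.left p.2
  right p := rx.right p.1 * ry.right p.2
  eq := by
    rw [Finset.sum_product]
    have : Coalgebra.comul (R := k) (x * y) = Coalgebra.comul (R := k) x * Coalgebra.comul (R := k) y := by
      simp
    rw [show CoalgebraStruct.comul (R := k) (x*y) = Coalgebra.comul (R := k) (x*y) from rfl, this,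
      ← rx.eq, ← ry.eq, Finset.sum_mul_sum]
    simp [Algebra.TensorProduct.tmul_mul_tmul]

end Mul

section SLem
variable {k H A : Type*} {ι κ : Type*} [CommRing k] [Ring H] [Bialgebra k H] [CommRing A] [Algebra k A]
  (S : H →ₗ[k] H)

lemma sum_S_mul (h1 : conv S LinearMap.id = convUnit k H H) {a : H} (r : Coalgebra.Repr k a ι) :
    ∑ i ∈ r.index, S (r.left i) * r.right i = algebraMap k H (Coalgebra.counit (R := k) a) := by
  have := LinearMap.congr_fun h1 a
  rwa [conv_repr S LinearMap.id r, convUnit_apply] at this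

lemma sum_mul_S (h2 : conv LinearMap.id S = convUnit k H H) {a : H} (r : Coalgebra.Repr k a ι) :
    ∑ i ∈ r.index, r.left i * S (r.right i) = algebraMap k H (Coalgebra.counit (R := k) a) := by
  have := LinearMap.congr_fun h2 a
  rwa [conv_repr LinearMap.id S r, convUnit_apply] at this

variable (f : H →ₐ[k] A)

lemma f_sum_S_mul (h1 : conv S LinearMap.id = convUnit k H H) {a : H} (r : Coalgebra.Repr k a ι) :
    ∑ i ∈ r.index, f (S (r.left i)) * f (r.right i)
      = algebraMap k A (Coalgebra.counit (R := k) a) := by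
  have := congrArg f (sum_S_mul S h1 r)
  simpa [map_sum] using this

lemma f_sum_mul_S (h2 : conv LinearMap.id S = convUnit k H H) {a : H} (r : Coalgebra.Repr k a ι) :
    ∑ i ∈ r.index, f (r.left i) * f (S (r.right i))
      = algebraMap k A (Coalgebra.counit (R := k) a) := by
  have := congrArg f (sum_mul_S S h2 r)
  simpa [map_sum] using this

/-- "ν * ρ = e" on pairs -/
lemma f_sum_S_mul_pair (h1 : conv S LinearMap.id = convUnit k H H) {x y : H}
    (rx : Coalgebra.Repr k x ι) (ry : Coalgebra.Repr k y κ) :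
    ∑ i ∈ rx.index, ∑ j ∈ ry.index,
        f (S (rx.left i * ry.left j)) * f (rx.right i * ry.right j)
      = algebraMap k A (Coalgebra.counit (R := k) x)
        * algebraMap k A (Coalgebra.counit (R := k) y) := by
  have := f_sum_S_mul S f h1 (mulRepr rx ry)
  rw [mulRepr, Finset.sum_product] at this
  simp only at this
  rw [this]
  simp [← map_mul]

lemma S_one (h2 : conv LinearMap.id S = convUnit k H H) : S 1 = 1 := by
  have := LinearMap.congr_fun h2 1
  simpa [conv, convUnit, Algebra.TensorProduct.one_def] using this

end SLem

section Psi
variable {k H A : Type*} {ι κ : Type*} [CommRing k] [Ring H] [Bialgebra k H] [CommRing A] [Algebra k A]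

/-- six-linear helper map -/
noncomputable def psi (f : H →ₐ[k] A) (S : H →ₗ[k] H) :
    ((H ⊗[k] (H ⊗[k] H)) ⊗[k] (H ⊗[k] (H ⊗[k] H))) →ₗ[k] A :=
  LinearMap.mul' k A ∘ₗ
    TensorProduct.map (f.toLinearMap ∘ₗ S ∘ₗ LinearMap.mul' k H)
      (LinearMap.mul' k A ∘ₗ
        TensorProduct.map (f.toLinearMap ∘ₗ LinearMap.mul' k H)
          (LinearMap.mul' k A ∘ₗ
            TensorProduct.map (f.toLinearMap ∘ₗ S) (f.toLinearMap ∘ₗ S)) ∘ₗ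
        (TensorProduct.tensorTensorTensorComm k H H H H).toLinearMap) ∘ₗ
    (TensorProduct.tensorTensorTensorComm k H (H ⊗[k] H) H (H ⊗[k] H)).toLinearMap

@[simp] lemma psi_tmul (f : H →ₐ[k] A) (S : H →ₗ[k] H) (a b e c d g : H) :
    psi f S ((a ⊗ₜ[k] (b ⊗ₜ[k] e)) ⊗ₜ[k] (c ⊗ₜ[k] (d ⊗ₜ[k] g)))
      = f (S (a * c)) * (f (b * d) * (f (S e) * f (S g))) := by
  simp [psi]

end Psi

section Antihom
variable {k H A : Type*} {ι κ : Type*} [CommRing k] [Ring H] [Bialgebra k H] [CommRing A] [Algebra k A]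

lemma sum_counit_f_S (S : H →ₗ[k] H) (f : H →ₐ[k] A) {a : H} (r : Coalgebra.Repr k a ι) :
    ∑ i ∈ r.index, algebraMap k A (Coalgebra.counit (R := k) (r.left i)) * f (S (r.right i))
      = f (S a) := by
  calc ∑ i ∈ r.index, algebraMap k A (Coalgebra.counit (R := k) (r.left i)) * f (S (r.right i))
      = ∑ i ∈ r.index, f (S (Coalgebra.counit (R := k) (r.left i) • r.right i)) := by
        refine Finset.sum_congr rfl fun i _ => ?_
        rw [map_smul, map_smul, Algebra.smul_def]
    _ = f (S (∑ i ∈ r.index, Coalgebra.counit (R := k) (r.left i) • r.right i)) := by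
        rw [map_sum, map_sum]
    _ = f (S a) := by rw [_root_.sum_counit_smul r]

lemma f_S_mul (S : H →ₗ[k] H)
    (h1 : conv S LinearMap.id = convUnit k H H)
    (h2 : conv LinearMap.id S = convUnit k H H)
    (f : H →ₐ[k] A) (x y : H) :
    f (S (x * y)) = f (S x) * f (S y) := by
  classical
  set rx := ℛ k x with hrxdef
  set ry := ℛ k y with hrydef
  let rx1 : ∀ i, Coalgebra.Repr k (rx.left i) (H × H) := fun i => ℛ k _
  let rx2 : ∀ i, Coalgebra.Repr k (rx.right i) (H × H) := fun i => ℛ k _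
  let ry1 : ∀ i, Coalgebra.Repr k (ry.left i) (H × H) := fun i => ℛ k _
  let ry2 : ∀ i, Coalgebra.Repr k (ry.right i) (H × H) := fun i => ℛ k _
  have hX := Coalgebra.sum_tmul_tmul_eq rx rx1 rx2
  have hY := Coalgebra.sum_tmul_tmul_eq ry ry1 ry2
  have key := congrArg₂ (fun u v => psi f S (u ⊗ₜ[k] v)) hX hY
  simp only [TensorProduct.sum_tmul, TensorProduct.tmul_sum, map_sum, psi_tmul] at key
  have eL : (∑ j ∈ ry.index, ∑ j' ∈ (ry1 j).index, ∑ i ∈ rx.index, ∑ i' ∈ (rx1 i).index,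
        f (S ((rx1 i).left i' * (ry1 j).left j')) *
          (f ((rx1 i).right i' * (ry1 j).right j') * (f (S (rx.right i)) * f (S (ry.right j)))))
      = f (S x) * f (S y) := by
    have step1 : ∀ j ∈ ry.index,
        (∑ j' ∈ (ry1 j).index, ∑ i ∈ rx.index, ∑ i' ∈ (rx1 i).index,
          f (S ((rx1 i).left i' * (ry1 j).left j')) *
            (f ((rx1 i).right i' * (ry1 j).right j') * (f (S (rx.right i)) * f (S (ry.right j)))))
        = ∑ i ∈ rx.index,
            (algebraMap k A (Coalgebra.counit (R := k) (rx.left i)) * f (S (rx.right i))) *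
            (algebraMap k A (Coalgebra.counit (R := k) (ry.left j)) * f (S (ry.right j))) := by
      intro j _
      rw [Finset.sum_comm]
      refine Finset.sum_congr rfl fun i _ => ?_
      rw [Finset.sum_comm]
      calc (∑ i' ∈ (rx1 i).index, ∑ j' ∈ (ry1 j).index,
              f (S ((rx1 i).left i' * (ry1 j).left j')) *
                (f ((rx1 i).right i' * (ry1 j).right j') * (f (S (rx.right i)) * f (S (ry.right j)))))
          = (∑ i' ∈ (rx1 i).index, ∑ j' ∈ (ry1 j).index,
              f (S ((rx1 i).left i' * (ry1 j).left j')) *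
                f ((rx1 i).right i' * (ry1 j).right j')) *
              (f (S (rx.right i)) * f (S (ry.right j))) := by
            rw [Finset.sum_mul]
            refine Finset.sum_congr rfl fun i' _ => ?_
            rw [Finset.sum_mul]
            exact Finset.sum_congr rfl fun j' _ => by ring
        _ = (algebraMap k A (Coalgebra.counit (R := k) (rx.left i)) *
              algebraMap k A (Coalgebra.counit (R := k) (ry.left j))) *
            (f (S (rx.right i)) * f (S (ry.right j))) := by
            rw [f_sum_S_mul_pair S f h1 (rx1 i) (ry1 j)]
        _ = _ := by ring
    calc (∑ j ∈ ry.index, ∑ j' ∈ (ry1 j).index, ∑ i ∈ rx.index, ∑ i' ∈ (rx1 i).index,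
            f (S ((rx1 i).left i' * (ry1 j).left j')) *
              (f ((rx1 i).right i' * (ry1 j).right j') * (f (S (rx.right i)) * f (S (ry.right j)))))
        = ∑ j ∈ ry.index, ∑ i ∈ rx.index,
            (algebraMap k A (Coalgebra.counit (R := k) (rx.left i)) * f (S (rx.right i))) *
            (algebraMap k A (Coalgebra.counit (R := k) (ry.left j)) * f (S (ry.right j))) :=
          Finset.sum_congr rfl step1
      _ = ∑ j ∈ ry.index,
            f (S x) * (algebraMap k A (Coalgebra.counit (R := k) (ry.left j)) * f (S (ry.right j))) := by
          refine Finset.sum_congr rfl fun j _ => ?_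
          rw [← Finset.sum_mul, sum_counit_f_S S f rx]
      _ = f (S x) * f (S y) := by
          rw [← Finset.mul_sum, sum_counit_f_S S f ry]
  have eR : (∑ j ∈ ry.index, ∑ j' ∈ (ry2 j).index, ∑ i ∈ rx.index, ∑ i' ∈ (rx2 i).index,
        f (S (rx.left i * ry.left j)) *
          (f ((rx2 i).left i' * (ry2 j).left j') *
            (f (S ((rx2 i).right i')) * f (S ((ry2 j).right j')))))
      = f (S (x * y)) := by
    have step1 : ∀ j ∈ ry.index,
        (∑ j' ∈ (ry2 j).index, ∑ i ∈ rx.index, ∑ i' ∈ (rx2 i).index,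
          f (S (rx.left i * ry.left j)) *
            (f ((rx2 i).left i' * (ry2 j).left j') *
              (f (S ((rx2 i).right i')) * f (S ((ry2 j).right j')))))
        = ∑ i ∈ rx.index, f (S (rx.left i * ry.left j)) *
            (algebraMap k A (Coalgebra.counit (R := k) (rx.right i)) *
             algebraMap k A (Coalgebra.counit (R := k) (ry.right j))) := by
      intro j _
      rw [Finset.sum_comm]
      refine Finset.sum_congr rfl fun i _ => ?_
      rw [Finset.sum_comm]
      calc (∑ i' ∈ (rx2 i).index, ∑ j' ∈ (ry2 j).index,
              f (S (rx.left i * ry.left j)) *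
                (f ((rx2 i).left i' * (ry2 j).left j') *
                  (f (S ((rx2 i).right i')) * f (S ((ry2 j).right j')))))
          = f (S (rx.left i * ry.left j)) *
              ((∑ i' ∈ (rx2 i).index, f ((rx2 i).left i') * f (S ((rx2 i).right i'))) *
               (∑ j' ∈ (ry2 j).index, f ((ry2 j).left j') * f (S ((ry2 j).right j')))) := by
            rw [Finset.sum_mul_sum, Finset.mul_sum]
            refine Finset.sum_congr rfl fun i' _ => ?_
            rw [Finset.mul_sum]
            refine Finset.sum_congr rfl fun j' _ => ?_
            rw [map_mul f]
            ring
        _ = _ := by rw [f_sum_mul_S S f h2 (rx2 i), f_sum_mul_S S f h2 (ry2 j)]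
    calc (∑ j ∈ ry.index, ∑ j' ∈ (ry2 j).index, ∑ i ∈ rx.index, ∑ i' ∈ (rx2 i).index,
            f (S (rx.left i * ry.left j)) *
              (f ((rx2 i).left i' * (ry2 j).left j') *
                (f (S ((rx2 i).right i')) * f (S ((ry2 j).right j')))))
        = ∑ j ∈ ry.index, ∑ i ∈ rx.index, f (S (rx.left i * ry.left j)) *
            (algebraMap k A (Coalgebra.counit (R := k) (rx.right i)) *
             algebraMap k A (Coalgebra.counit (R := k) (ry.right j))) :=
          Finset.sum_congr rfl step1
      _ = ∑ j ∈ ry.index, ∑ i ∈ rx.index,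
            f (S ((Coalgebra.counit (R := k) (rx.right i) • rx.left i) *
                  (Coalgebra.counit (R := k) (ry.right j) • ry.left j))) := by
          refine Finset.sum_congr rfl fun j _ => Finset.sum_congr rfl fun i _ => ?_
          rw [smul_mul_smul_comm, map_smul S, map_smul f, Algebra.smul_def, map_mul (algebraMap k A) _ _]
          ring
      _ = f (S ((∑ i ∈ rx.index, Coalgebra.counit (R := k) (rx.right i) • rx.left i) *
                (∑ j ∈ ry.index, Coalgebra.counit (R := k) (ry.right j) • ry.left j))) := by
          rw [Finset.sum_mul_sum]
          simp only [map_sum]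
          exact Finset.sum_comm
      _ = f (S (x * y)) := by rw [sum_smul_counit rx, sum_smul_counit ry]
  exact eR.symm.trans (key.symm.trans eL)

end Antihom

/-- let `H` be a connected filtered cograded Hopf algebra over `k`, with
antipode `S`, and `A` a commutative unital `k`-algebra. Then the characters
(algebra homomorphisms `H → A`) form a group under convolution: the unit `e = u_A∘ε` is a
character, the convolution of two characters is a character, `e` is a two-sided identity,
and the inverse of a character `φ` is the character `φ ∘ S`. -/
theorem characters_form_group {k H A : Type*} [CommRing k] [Ring H] [Bialgebra k H]
    [CommRing A] [Algebra k A]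
    (ℋ : ℕ → Submodule k H)
    (hdirect : DirectSum.IsInternal ℋ)
    (hmul : ∀ p q : ℕ, ∀ x ∈ ℋ p, ∀ y ∈ ℋ q, x * y ∈ ⨆ i ≤ p + q, ℋ i)
    (hcomul : ∀ n : ℕ, ∀ x ∈ ℋ n,
      Coalgebra.comul (R := k) x ∈ ⨆ (p : ℕ) (q : ℕ) (_ : p + q = n),
        LinearMap.range (TensorProduct.map (ℋ p).subtype (ℋ q).subtype))
    (hconn : ℋ 0 = Submodule.span k {(1 : H)})
    (S : H →ₗ[k] H)
    (hS : conv S LinearMap.id = convUnit k H H ∧ conv LinearMap.id S = convUnit k H H) :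
    (∃ echar : H →ₐ[k] A, echar.toLinearMap = convUnit k H A) ∧
    (∀ f g : H →ₐ[k] A, ∃ h : H →ₐ[k] A,
      h.toLinearMap = conv f.toLinearMap g.toLinearMap) ∧
    (∀ f : H →ₐ[k] A,
      conv f.toLinearMap (convUnit k H A) = f.toLinearMap ∧
      conv (convUnit k H A) f.toLinearMap = f.toLinearMap) ∧
    (∀ f : H →ₐ[k] A, ∃ g : H →ₐ[k] A,
      g.toLinearMap = f.toLinearMap ∘ₗ S ∧
      conv f.toLinearMap g.toLinearMap = convUnit k H A ∧
      conv g.toLinearMap f.toLinearMap = convUnit k H A) := by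
  obtain ⟨h1, h2⟩ := hS
  refine ⟨?_, ?_, ?_, ?_⟩
  · exact ⟨(Algebra.ofId k A).comp (Bialgebra.counitAlgHom k H), rfl⟩
  · intro f g
    refine ⟨(Algebra.TensorProduct.lmul' k).comp
      ((Algebra.TensorProduct.map f g).comp (Bialgebra.comulAlgHom k H)), ?_⟩
    have key : ∀ z : H ⊗[k] H, Algebra.TensorProduct.lmul' k (Algebra.TensorProduct.map f g z)
        = LinearMap.mul' k A (TensorProduct.map f.toLinearMap g.toLinearMap z) := by
      intro z
      induction z using TensorProduct.induction_on with
      | zero => simp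
      | tmul a b => simp
      | add u v hu hv => simp only [map_add, hu, hv]
    exact LinearMap.ext fun x => key (Coalgebra.comul x)
  · intro f
    constructor
    · apply LinearMap.ext; intro a
      rw [conv_repr _ _ (ℛ k a)]
      calc ∑ i ∈ (ℛ k a).index, f ((ℛ k a).left i) * convUnit k H A ((ℛ k a).right i)
          = ∑ i ∈ (ℛ k a).index,
              f (Coalgebra.counit (R := k) ((ℛ k a).right i) • (ℛ k a).left i) := by
            refine Finset.sum_congr rfl fun i _ => ?_
            rw [convUnit_apply, map_smul, Algebra.smul_def]
            ring
        _ = f a := by rw [← map_sum, sum_smul_counit (ℛ k a)]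
    · apply LinearMap.ext; intro a
      rw [conv_repr _ _ (ℛ k a)]
      calc ∑ i ∈ (ℛ k a).index, convUnit k H A ((ℛ k a).left i) * f ((ℛ k a).right i)
          = ∑ i ∈ (ℛ k a).index,
              f (Coalgebra.counit (R := k) ((ℛ k a).left i) • (ℛ k a).right i) := by
            refine Finset.sum_congr rfl fun i _ => ?_
            rw [convUnit_apply, map_smul, Algebra.smul_def]
        _ = f a := by rw [← map_sum, _root_.sum_counit_smul (ℛ k a)]
  · intro f
    have hg1 : (f.toLinearMap ∘ₗ S) 1 = 1 := by
      show f (S 1) = 1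
      rw [S_one S h2, map_one]
    refine ⟨AlgHom.ofLinearMap (f.toLinearMap ∘ₗ S) hg1
      (fun x y => f_S_mul S h1 h2 f x y), rfl, ?_, ?_⟩
    · apply LinearMap.ext; intro a
      rw [conv_repr _ _ (ℛ k a), convUnit_apply]
      exact f_sum_mul_S S f h2 (ℛ k a)
    · apply LinearMap.ext; intro a
      rw [conv_repr _ _ (ℛ k a), convUnit_apply]
      exact f_sum_S_mul S f h1 (ℛ k a)
end

section
/- (Uniqueness of the Atkinson Factorization.) Let (R, P, R_n) be a complete Rota–Baxter algebra of weight λ over a commutative ring k, set P̃ = −λ·id − P, and let a ∈ R_1. Assume that λ has no non-zero divisors in R_1 (i.e. λx = 0 with x ∈ R_1 implies x = 0) and that P² = −λP on R_1. Then there exist unique elements c_ℓ ∈ 1 + P(R_1) and c_r ∈ 1 + P̃(R_1) such that 1 + λa = c_ℓ c_r. -/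
/-- The operator `P̃ = -λ·id - P` associated to a Rota–Baxter operator `P` of weight `λ`. -/
def tildeOp {k R : Type*} [CommRing k] [Ring R] [Algebra k R]
    (lam : k) (P : R →ₗ[k] R) : R → R :=
  fun x => -(lam • x) - P x

/-- Iteration scheme producing the Atkinson factorization. -/
private def atkSeq {k R : Type*} [CommRing k] [Ring R] [Algebra k R]
    (lam : k) (P : R →ₗ[k] R) (a : R) : ℕ → R × R
  | 0 => (-a, -a)
  | n + 1 =>
    (-a - (atkSeq lam P a n).1 * tildeOp lam P (atkSeq lam P a n).2,
     -a - P (atkSeq lam P a n).1 * (atkSeq lam P a n).2)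

/-- Uniqueness of the Atkinson Factorization: in a complete
(filtered) Rota–Baxter algebra `(R, P, Fₙ)` of weight `λ`, if `λ` has no nonzero
divisors in `F 1` and `P² = -λP` on `F 1`, then for `a ∈ F 1` there are unique
`c_ℓ ∈ 1 + P(F 1)` and `c_r ∈ 1 + P̃(F 1)` with `1 + λa = c_ℓ c_r`. -/
theorem atkinson_factorization_unique {k R : Type*} [CommRing k] [Ring R] [Algebra k R]
    (lam : k) (P : R →ₗ[k] R)
    (hP : ∀ x y : R, P x * P y = P (x * P y) + P (P x * y) + lam • P (x * y))
    (F : ℕ → Submodule k R)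
    (hF0 : F 0 = ⊤)
    (hdec : ∀ n : ℕ, F (n + 1) ≤ F n)
    (hmul : ∀ m n : ℕ, ∀ x ∈ F m, ∀ y ∈ F n, x * y ∈ F (m + n))
    (hsep : (⨅ n, F n) = ⊥)
    (hcomplete : ∀ f : ℕ → R,
      (∀ m : ℕ, ∃ N : ℕ, ∀ p ≥ N, ∀ q ≥ N, f p - f q ∈ F m) →
      ∃ x : R, ∀ m : ℕ, ∃ N : ℕ, ∀ n ≥ N, x - f n ∈ F m)
    (hPF : ∀ n : ℕ, ∀ x ∈ F n, P x ∈ F n)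
    (hreg : ∀ x ∈ F 1, lam • x = 0 → x = 0)
    (hP2 : ∀ x ∈ F 1, P (P x) = -(lam • P x))
    (a : R) (ha : a ∈ F 1) :
    ∃ u v : R, u ∈ F 1 ∧ v ∈ F 1 ∧
      1 + lam • a = (1 + P u) * (1 + tildeOp lam P v) ∧
      ∀ u' v' : R, u' ∈ F 1 → v' ∈ F 1 →
        1 + lam • a = (1 + P u') * (1 + tildeOp lam P v') →
        1 + P u' = 1 + P u ∧ 1 + tildeOp lam P v' = 1 + tildeOp lam P v := by
  -- monotonicity of the filtration
  have Fmono : ∀ m n : ℕ, m ≤ n → F n ≤ F m := by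
    intro m n h
    induction h with
    | refl => exact le_rfl
    | step _ ih => exact le_trans (hdec _) ih
  -- tildeOp preserves filtration
  have hTmem : ∀ (n : ℕ) (x : R), x ∈ F n → tildeOp lam P x ∈ F n := by
    intro n x hx
    exact sub_mem (neg_mem (Submodule.smul_mem _ _ hx)) (hPF n x hx)
  have hTsub : ∀ x y : R, tildeOp lam P x - tildeOp lam P y = tildeOp lam P (x - y) := by
    intro x y
    simp only [tildeOp, map_sub, smul_sub]; abel
  have hTadd : ∀ x y : R, tildeOp lam P x + tildeOp lam P y = tildeOp lam P (x + y) := by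
    intro x y
    simp only [tildeOp, map_add, smul_add]; abel
  -- the cross identity
  have hcross : ∀ x y : R,
      P x * tildeOp lam P y = P (x * tildeOp lam P y) + tildeOp lam P (P x * y) := by
    intro x y
    simp only [tildeOp, mul_sub, sub_mul, mul_neg, neg_mul, mul_smul_comm, smul_mul_assoc,
      map_sub, map_neg, map_smul, hP]
    abel
  -- P ∘ tildeOp = 0 and tildeOp ∘ P = 0 on F 1
  have hPT : ∀ x ∈ F 1, P (tildeOp lam P x) = 0 := by
    intro x hx
    simp only [tildeOp, map_sub, map_neg, map_smul, hP2 x hx]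
    abel
  have hTP : ∀ x ∈ F 1, tildeOp lam P (P x) = 0 := by
    intro x hx
    simp only [tildeOp, hP2 x hx]
    abel
  have hzero : ∀ x : R, (∀ m : ℕ, x ∈ F m) → x = 0 := by
    intro x hx
    have : x ∈ ⨅ n, F n := Submodule.mem_iInf F |>.mpr hx
    rw [hsep] at this
    simpa using this
  -- the sequence
  set s : ℕ → R × R := atkSeq lam P a with hs
  have hsS : ∀ n, s (n + 1) =
      (-a - (s n).1 * tildeOp lam P (s n).2, -a - P (s n).1 * (s n).2) := fun n => rfl
  have hs0 : s 0 = (-a, -a) := rfl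
  have hmem : ∀ n, (s n).1 ∈ F 1 ∧ (s n).2 ∈ F 1 := by
    intro n
    induction n with
    | zero => exact ⟨neg_mem ha, neg_mem ha⟩
    | succ n ih =>
      rw [hsS n]
      constructor
      · exact sub_mem (neg_mem ha)
          (Fmono 1 2 one_le_two (hmul 1 1 _ ih.1 _ (hTmem 1 _ ih.2)))
      · exact sub_mem (neg_mem ha)
          (Fmono 1 2 one_le_two (hmul 1 1 _ (hPF 1 _ ih.1) _ ih.2))
  have hdiff : ∀ n, ((s (n + 1)).1 - (s n).1 ∈ F (n + 2)) ∧
      ((s (n + 1)).2 - (s n).2 ∈ F (n + 2)) := by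
    intro n
    induction n with
    | zero =>
      constructor
      · have e : (s 1).1 - (s 0).1 = -((s 0).1 * tildeOp lam P (s 0).2) := by
          rw [hsS 0, hs0]; dsimp only; abel
        rw [e]
        exact neg_mem (hmul 1 1 _ (hmem 0).1 _ (hTmem 1 _ (hmem 0).2))
      · have e : (s 1).2 - (s 0).2 = -(P (s 0).1 * (s 0).2) := by
          rw [hsS 0, hs0]; dsimp only; abel
        rw [e]
        exact neg_mem (hmul 1 1 _ (hPF 1 _ (hmem 0).1) _ (hmem 0).2)
    | succ n ih =>
      constructor
      · have e : (s (n + 2)).1 - (s (n + 1)).1 =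
            -(((s (n + 1)).1 - (s n).1) * tildeOp lam P (s (n + 1)).2
              + (s n).1 * (tildeOp lam P (s (n + 1)).2 - tildeOp lam P (s n).2)) := by
          rw [hsS (n + 1), hsS n]
          dsimp only
          noncomm_ring
        rw [e]
        refine neg_mem (add_mem ?_ ?_)
        · exact Fmono (n + 3) (n + 2 + 1) le_rfl
            (hmul (n + 2) 1 _ ih.1 _ (hTmem 1 _ (hmem (n + 1)).2))
        · rw [hTsub]
          have := hmul 1 (n + 2) _ (hmem n).1 _ (hTmem (n + 2) _ ih.2)
          exact Fmono (n + 3) (1 + (n + 2)) (by omega) this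
      · have e : (s (n + 2)).2 - (s (n + 1)).2 =
            -((P (s (n + 1)).1 - P (s n).1) * (s (n + 1)).2
              + P (s n).1 * ((s (n + 1)).2 - (s n).2)) := by
          rw [hsS (n + 1), hsS n]
          dsimp only
          noncomm_ring
        rw [e]
        refine neg_mem (add_mem ?_ ?_)
        · rw [← map_sub]
          exact Fmono (n + 3) (n + 2 + 1) le_rfl
            (hmul (n + 2) 1 _ (hPF (n + 2) _ ih.1) _ (hmem (n + 1)).2)
        · have := hmul 1 (n + 2) _ (hPF 1 _ (hmem n).1) _ ih.2
          exact Fmono (n + 3) (1 + (n + 2)) (by omega) this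
  -- Cauchy criterion
  have hC : ∀ g : ℕ → R, (∀ n, g (n + 1) - g n ∈ F (n + 2)) →
      ∀ m : ℕ, ∃ N : ℕ, ∀ p ≥ N, ∀ q ≥ N, g p - g q ∈ F m := by
    intro g hg m
    refine ⟨m, ?_⟩
    have key : ∀ q d : ℕ, m ≤ q → g (q + d) - g q ∈ F m := by
      intro q d hq
      induction d with
      | zero => simpa using zero_mem (F m)
      | succ d ih =>
        have e : g (q + (d + 1)) - g q = (g (q + d + 1) - g (q + d)) + (g (q + d) - g q) := by
          have : q + (d + 1) = q + d + 1 := by omega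
          rw [this]; abel
        rw [e]
        exact add_mem (Fmono m (q + d + 2) (by omega) (hg (q + d))) ih
    intro p hp q hq
    rcases le_total q p with h | h
    · obtain ⟨d, rfl⟩ := Nat.le.dest h
      exact key q d hq
    · obtain ⟨d, rfl⟩ := Nat.le.dest h
      have := key p d hp
      have e : g p - g (p + d) = -(g (p + d) - g p) := by abel
      rw [e]
      exact neg_mem this
  obtain ⟨u, hu_lim⟩ := hcomplete (fun n => (s n).1) (hC _ fun n => (hdiff n).1)
  obtain ⟨v, hv_lim⟩ := hcomplete (fun n => (s n).2) (hC _ fun n => (hdiff n).2)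
  have hu1 : u ∈ F 1 := by
    obtain ⟨N, hN⟩ := hu_lim 1
    have h1 := hN N le_rfl
    have := add_mem h1 (hmem N).1
    simpa using this
  have hv1 : v ∈ F 1 := by
    obtain ⟨N, hN⟩ := hv_lim 1
    have h1 := hN N le_rfl
    have := add_mem h1 (hmem N).2
    simpa using this
  -- the fixed-point equations
  have hufix : u + a + u * tildeOp lam P v = 0 := by
    apply hzero
    intro m
    obtain ⟨N₁, hN₁⟩ := hu_lim m
    obtain ⟨N₂, hN₂⟩ := hv_lim m
    set n := max N₁ N₂ with hn
    have e : u + a + u * tildeOp lam P v =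
        (u - (s (n + 1)).1) + ((u - (s n).1) * tildeOp lam P v
          + (s n).1 * (tildeOp lam P v - tildeOp lam P (s n).2)) := by
      rw [hsS n]
      dsimp only
      noncomm_ring
    rw [e]
    refine add_mem (hN₁ (n + 1) (by omega)) (add_mem ?_ ?_)
    · exact Fmono m (m + 1) (by omega)
        (hmul m 1 _ (hN₁ n (le_max_left _ _)) _ (hTmem 1 _ hv1))
    · rw [hTsub]
      exact Fmono m (1 + m) (by omega)
        (hmul 1 m _ (hmem n).1 _ (hTmem m _ (hN₂ n (le_max_right _ _))))
  have hvfix : v + a + P u * v = 0 := by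
    apply hzero
    intro m
    obtain ⟨N₁, hN₁⟩ := hu_lim m
    obtain ⟨N₂, hN₂⟩ := hv_lim m
    set n := max N₁ N₂ with hn
    have e : v + a + P u * v =
        (v - (s (n + 1)).2) + ((P u - P (s n).1) * v
          + P (s n).1 * (v - (s n).2)) := by
      rw [hsS n]
      dsimp only
      noncomm_ring
    rw [e]
    refine add_mem (hN₂ (n + 1) (by omega)) (add_mem ?_ ?_)
    · rw [← map_sub]
      exact Fmono m (m + 1) (by omega)
        (hmul m 1 _ (hPF m _ (hN₁ n (le_max_left _ _))) _ hv1)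
    · exact Fmono m (1 + m) (by omega)
        (hmul 1 m _ (hPF 1 _ (hmem n).1) _ (hN₂ n (le_max_right _ _)))
  -- the factorization identity
  have hsum1 : u + u * tildeOp lam P v = -a := by
    have e : u + u * tildeOp lam P v = (u + a + u * tildeOp lam P v) - a := by abel
    rw [e, hufix]; abel
  have hsum2 : v + P u * v = -a := by
    have e : v + P u * v = (v + a + P u * v) - a := by abel
    rw [e, hvfix]; abel
  have hmain : 1 + lam • a = (1 + P u) * (1 + tildeOp lam P v) := by
    have expand : (1 + P u) * (1 + tildeOp lam P v) =
        1 + (P u + P (u * tildeOp lam P v)) + (tildeOp lam P v + tildeOp lam P (P u * v)) := by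
      calc (1 + P u) * (1 + tildeOp lam P v)
          = 1 + P u + tildeOp lam P v + P u * tildeOp lam P v := by noncomm_ring
        _ = _ := by rw [hcross u v]; abel
    rw [expand, ← map_add, hTadd, hsum1, hsum2]
    have : tildeOp lam P (-a) = lam • a + P a := by
      simp only [tildeOp, smul_neg, map_neg]; abel
    rw [this]
    simp only [map_neg]
    abel
  refine ⟨u, v, hu1, hv1, hmain, ?_⟩
  -- uniqueness
  intro u' v' hu'1 hv'1 heq
  set D := P u' - P u with hD
  set E := tildeOp lam P v' - tildeOp lam P v with hE
  have hexp : (1 + P u') * (1 + tildeOp lam P v') = (1 + P u) * (1 + tildeOp lam P v) :=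
    heq.symm.trans hmain
  have hDE : D + E + D * tildeOp lam P v' + P u * E = 0 := by
    have e : D + E + D * tildeOp lam P v' + P u * E =
        (1 + P u') * (1 + tildeOp lam P v') - (1 + P u) * (1 + tildeOp lam P v) := by
      rw [hD, hE]; noncomm_ring
    rw [e, hexp, sub_self]
  have hDP : D = P (u' - u) := by rw [hD, map_sub]
  have hET : E = tildeOp lam P (v' - v) := by rw [hE, hTsub]
  have hD1 : D ∈ F 1 := by rw [hDP]; exact hPF 1 _ (sub_mem hu'1 hu1)
  have hE1 : E ∈ F 1 := by rw [hET]; exact hTmem 1 _ (sub_mem hv'1 hv1)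
  have hPD : P D = -(lam • D) := by rw [hDP]; exact hP2 _ (sub_mem hu'1 hu1)
  have hPE : P E = 0 := by rw [hET]; exact hPT _ (sub_mem hv'1 hv1)
  -- the key induction
  have key : ∀ n : ℕ, D ∈ F (n + 1) ∧ E ∈ F (n + 1) := by
    intro n
    induction n with
    | zero => exact ⟨hD1, hE1⟩
    | succ n ih =>
      -- decompositions via the cross identity
      have c₃ : D * tildeOp lam P v' =
          P ((u' - u) * tildeOp lam P v') + tildeOp lam P (D * v') := by
        rw [hDP]; exact hcross (u' - u) v'
      have c₄ : P u * E = P (u * E) + tildeOp lam P (P u * (v' - v)) := by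
        rw [hET]; exact hcross u (v' - v)
      have hx₃1 : (u' - u) * tildeOp lam P v' ∈ F 1 :=
        Fmono 1 2 one_le_two (hmul 1 1 _ (sub_mem hu'1 hu1) _ (hTmem 1 _ hv'1))
      have hy₃1 : D * v' ∈ F 1 :=
        Fmono 1 2 one_le_two (hmul 1 1 _ hD1 _ hv'1)
      have hx₄1 : u * E ∈ F 1 :=
        Fmono 1 2 one_le_two (hmul 1 1 _ hu1 _ hE1)
      have hy₄1 : P u * (v' - v) ∈ F 1 :=
        Fmono 1 2 one_le_two (hmul 1 1 _ (hPF 1 _ hu1) _ (sub_mem hv'1 hv1))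
      -- apply P to hDE
      have hPQ : P D + P E + P (D * tildeOp lam P v') + P (P u * E) = 0 := by
        have := congrArg P hDE
        simpa only [map_add, map_zero] using this
      have e₃ : P (D * tildeOp lam P v') = -(lam • P ((u' - u) * tildeOp lam P v')) := by
        rw [c₃, map_add, hP2 _ hx₃1, hPT _ hy₃1, add_zero]
      have e₄ : P (P u * E) = -(lam • P (u * E)) := by
        rw [c₄, map_add, hP2 _ hx₄1, hPT _ hy₄1, add_zero]
      rw [hPD, hPE, e₃, e₄] at hPQ
      have hsmul : lam • (D + P ((u' - u) * tildeOp lam P v') + P (u * E)) = 0 := by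
        rw [smul_add, smul_add]
        have : -(lam • D + lam • P ((u' - u) * tildeOp lam P v') + lam • P (u * E)) = 0 := by
          rw [← hPQ]; abel
        exact neg_eq_zero.mp this
      have hDsum : D + P ((u' - u) * tildeOp lam P v') + P (u * E) = 0 :=
        hreg _ (add_mem (add_mem hD1 (hPF 1 _ hx₃1)) (hPF 1 _ hx₄1)) hsmul
      have hDnew : D = -(P ((u' - u) * tildeOp lam P v')) - P (u * E) := by
        rw [← sub_eq_zero, show D - (-(P ((u' - u) * tildeOp lam P v')) - P (u * E)) =
          D + P ((u' - u) * tildeOp lam P v') + P (u * E) from by abel]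
        exact hDsum
      -- memberships in F (n + 2)
      have hm₃ : P ((u' - u) * tildeOp lam P v') ∈ F (n + 2) := by
        have e : P ((u' - u) * tildeOp lam P v') =
            D * tildeOp lam P v' - tildeOp lam P (D * v') := by
          rw [c₃]; abel
        rw [e]
        refine sub_mem ?_ ?_
        · exact Fmono (n + 2) (n + 1 + 1) le_rfl
            (hmul (n + 1) 1 _ ih.1 _ (hTmem 1 _ hv'1))
        · exact hTmem (n + 2) _ (Fmono (n + 2) (n + 1 + 1) le_rfl
            (hmul (n + 1) 1 _ ih.1 _ hv'1))
      have hm₄ : P (u * E) ∈ F (n + 2) := by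
        apply hPF
        exact Fmono (n + 2) (1 + (n + 1)) (by omega) (hmul 1 (n + 1) _ hu1 _ ih.2)
      have hDmem : D ∈ F (n + 2) := by
        rw [hDnew]; exact sub_mem (neg_mem hm₃) hm₄
      have hEmem : E ∈ F (n + 2) := by
        have e : E = -(D + D * tildeOp lam P v' + P u * E) := by
          rw [← sub_eq_zero, show E - -(D + D * tildeOp lam P v' + P u * E) =
            D + E + D * tildeOp lam P v' + P u * E from by abel]
          exact hDE
        rw [e]
        refine neg_mem (add_mem (add_mem hDmem ?_) ?_)
        · exact Fmono (n + 2) (n + 1 + 1) le_rfl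
            (hmul (n + 1) 1 _ ih.1 _ (hTmem 1 _ hv'1))
        · exact Fmono (n + 2) (1 + (n + 1)) (by omega)
            (hmul 1 (n + 1) _ (hPF 1 _ hu1) _ ih.2)
      exact ⟨hDmem, hEmem⟩
  have hD0 : D = 0 := by
    apply hzero
    intro m
    cases m with
    | zero => rw [hF0]; trivial
    | succ m => exact (key m).1
  have hE0 : E = 0 := by
    apply hzero
    intro m
    cases m with
    | zero => rw [hF0]; trivial
    | succ m => exact (key m).2
  constructor
  · have : P u' = P u := by
      have := hD0
      rw [hD] at this
      exact sub_eq_zero.mp this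
    rw [this]
  · have : tildeOp lam P v' = tildeOp lam P v := by
      have := hE0
      rw [hE] at this
      exact sub_eq_zero.mp this
    rw [this]
end

section
/- (Kingman.) Let (R,P) be a Rota–Baxter algebra of weight −1 over a commutative ring k, and set P̃ = id − P. Then: (i) for all a, b ∈ R, P(a)P(b) = P(P(a)P(b) − P̃(a)P̃(b)); (ii) for all n ≥ 2 and a_1, …, a_n ∈ R, the ordered product satisfies ∏_{i=1}^{n} P(a_i) = P(∏_{i=1}^{n} P(a_i) − ∏_{i=1}^{n} (−P̃(a_i))); in particular, taking all a_i = u, P(u)^n = P(P(u)^n − (−P̃(u))^n) for all u ∈ R and n ≥ 2. -/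
/-- Kingman: in a Rota–Baxter algebra `(R,P)` of weight `-1`, with
`P̃ = id - P` (so `P̃ a = a - P a`):
(i) `P(a)P(b) = P(P(a)P(b) - P̃(a)P̃(b))` for all `a, b`;
(ii) for `n ≥ 2`, the ordered product satisfies
`∏ P(aᵢ) = P(∏ P(aᵢ) - ∏ (-P̃(aᵢ)))`; in particular `P(u)ⁿ = P(P(u)ⁿ - (-P̃(u))ⁿ)`. -/
theorem kingman_identities {k R : Type*} [CommRing k] [Ring R] [Algebra k R]
    (P : R →ₗ[k] R)
    (hP : ∀ x y : R, P x * P y = P (x * P y) + P (P x * y) - P (x * y)) :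
    (∀ a b : R, P a * P b = P (P a * P b - (a - P a) * (b - P b))) ∧
    (∀ n : ℕ, 2 ≤ n → ∀ a : Fin n → R,
      (List.ofFn fun i => P (a i)).prod =
        P ((List.ofFn fun i => P (a i)).prod - (List.ofFn fun i => -(a i - P (a i))).prod)) ∧
    (∀ u : R, ∀ n : ℕ, 2 ≤ n → P u ^ n = P (P u ^ n - (-(u - P u)) ^ n)) := by
  have part1 : ∀ a b : R, P a * P b = P (P a * P b - (a - P a) * (b - P b)) := by
    intro a b
    have key : P a * P b - (a - P a) * (b - P b) = a * P b + P a * b - a * b := by noncomm_ring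
    rw [key, map_sub, map_add, ← hP a b]
  have part2 : ∀ n : ℕ, 2 ≤ n → ∀ a : Fin n → R,
      (List.ofFn fun i => P (a i)).prod =
        P ((List.ofFn fun i => P (a i)).prod - (List.ofFn fun i => -(a i - P (a i))).prod) := by
    intro n hn
    induction n, hn using Nat.le_induction with
    | base =>
      intro a
      have h := part1 (a 0) (a 1)
      simp only [List.ofFn_succ, List.ofFn_zero, List.prod_cons, List.prod_nil, mul_one,
        Fin.succ_zero_eq_one]
      convert h using 3
      noncomm_ring
    | succ n hn ih =>
      intro a
      rw [List.ofFn_succ' (f := fun i => P (a i)),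
        List.ofFn_succ' (f := fun i => -(a i - P (a i))),
        List.prod_concat, List.prod_concat]
      set X := (List.ofFn fun i : Fin n => P (a i.castSucc)).prod with hXdef
      set Y := (List.ofFn fun i : Fin n => -(a i.castSucc - P (a i.castSucc))).prod with hYdef
      set c := a (Fin.last n) with hc
      have hX : X = P (X - Y) := ih (fun i => a i.castSucc)
      calc X * P c = P (X - Y) * P c := by rw [← hX]
        _ = P (P (X - Y) * P c - ((X - Y) - P (X - Y)) * (c - P c)) := part1 _ _
        _ = P (X * P c - Y * -(c - P c)) := by rw [← hX]; congr 1; noncomm_ring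
  refine ⟨part1, part2, ?_⟩
  intro u n hn
  have h := part2 n hn (fun _ => u)
  simpa [List.ofFn_const, List.prod_replicate] using h
end
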